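/- Let ω be a radial weight. Then ω ∈ 𝒟̌ (i.e., there exist K > 1 and C > 1 with ω̂(r) ≥ C·ω̂(1 − (1−r)/K) for all 0 ≤ r < 1) if and only if there exist C > 0 and β > 0 such that ω̂(t) ≤ C·((1−t)/(1−r))^β·ω̂(r) for all 0 ≤ r ≤ t < 1. -/

import Mathlib

open MeasureTheory Real Set

/-- `Ψ` is essentially increasing on `[0,∞)`. -/
def EssInc (Ψ : ℝ → ℝ) : Prop := ∃ C > (0:ℝ), ∀ x y : ℝ, 0 ≤ x → x ≤ y → Ψ x ≤ C * Ψ y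

/-- `Ψ` is essentially decreasing on `[0,∞)`. -/
def EssDec (Ψ : ℝ → ℝ) : Prop := ∃ C > (0:ℝ), ∀ x y : ℝ, 0 ≤ x → x ≤ y → Ψ y ≤ C * Ψ x

/-- The doubling property `Ψ(x) ≍ Ψ(x²)` on `[0,∞)`. -/
def Doubling (Ψ : ℝ → ℝ) : Prop :=
  ∃ c > (0:ℝ), ∃ C > (0:ℝ), ∀ x : ℝ, 0 ≤ x → c * Ψ (x ^ 2) ≤ Ψ x ∧ Ψ x ≤ C * Ψ (x ^ 2)

/-- The class `𝓛`: positive, essentially monotonic, doubling. -/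
def InL (Ψ : ℝ → ℝ) : Prop :=
  (∀ x : ℝ, 0 ≤ x → 0 < Ψ x) ∧ (EssInc Ψ ∨ EssDec Ψ) ∧ Doubling Ψ

/-- Tail integral of a radial weight. -/
noncomputable def omHat (ω : ℝ → ℝ) (r : ℝ) : ℝ := ∫ s in r..1, ω s

/-- The class `𝒟̂` of radial weights with doubling tails. -/
def Dhat (ω : ℝ → ℝ) : Prop :=
  ∃ C : ℝ, 1 ≤ C ∧ ∀ r ∈ Set.Ico (0:ℝ) 1, omHat ω r ≤ C * omHat ω ((1 + r) / 2)

/-- The class `𝒟̌` of radial weights with reverse-doubling tails. -/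
def Dcheck (ω : ℝ → ℝ) : Prop :=
  ∃ K : ℝ, 1 < K ∧ ∃ C : ℝ, 1 < C ∧ ∀ r ∈ Set.Ico (0:ℝ) 1,
    C * omHat ω (1 - (1 - r) / K) ≤ omHat ω r

lemma omHat_nonneg (ω : ℝ → ℝ) (hnn : ∀ r ∈ Set.Ico (0:ℝ) 1, 0 ≤ ω r)
    {r : ℝ} (hr0 : 0 ≤ r) (hr1 : r ≤ 1) : 0 ≤ omHat ω r := by
  apply intervalIntegral.integral_nonneg_of_ae_restrict hr1
  rw [Filter.EventuallyLE, ae_restrict_iff' measurableSet_Icc]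
  have h1 : ∀ᵐ x : ℝ, x ≠ 1 := by
    have := Real.volume_singleton (a := 1)
    exact (MeasureTheory.measure_eq_zero_iff_ae_notMem.1 this).mono (by simp)
  filter_upwards [h1] with x hx hmem
  exact hnn x ⟨le_trans hr0 hmem.1, lt_of_le_of_ne hmem.2 hx⟩

lemma omHat_anti (ω : ℝ → ℝ) (hnn : ∀ r ∈ Set.Ico (0:ℝ) 1, 0 ≤ ω r)
    (hint : IntervalIntegrable ω volume 0 1) {a b : ℝ} (ha : 0 ≤ a) (hab : a ≤ b)
    (hb : b < 1) : omHat ω b ≤ omHat ω a := by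
  have hsub : ∀ c d : ℝ, 0 ≤ c → c ≤ d → d ≤ 1 → IntervalIntegrable ω volume c d := by
    intro c d hc hcd hd
    refine hint.mono_set ?_
    rw [Set.uIcc_of_le hcd, Set.uIcc_of_le zero_le_one]
    exact Set.Icc_subset_Icc hc hd
  have h1 : IntervalIntegrable ω volume a b := hsub a b ha hab hb.le
  have h2 : IntervalIntegrable ω volume b 1 := hsub b 1 (ha.trans hab) hb.le le_rfl
  have hsplit : (∫ s in a..b, ω s) + omHat ω b = omHat ω a :=
    intervalIntegral.integral_add_adjacent_intervals h1 h2
  have hpos : 0 ≤ ∫ s in a..b, ω s :=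
    intervalIntegral.integral_nonneg hab fun u hu =>
      hnn u ⟨le_trans ha hu.1, lt_of_le_of_lt hu.2 hb⟩
  linarith

lemma omHat_iter (ω : ℝ → ℝ) {K C : ℝ} (hK : 1 < K) (hC : 1 < C)
    (h : ∀ r ∈ Set.Ico (0:ℝ) 1, C * omHat ω (1 - (1 - r) / K) ≤ omHat ω r) :
    ∀ n : ℕ, ∀ r ∈ Set.Ico (0:ℝ) 1, C ^ n * omHat ω (1 - (1 - r) / K ^ n) ≤ omHat ω r := by
  intro n
  induction n with
  | zero => intro r hr; simp
  | succ n ih =>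
    intro r hr
    obtain ⟨hr0, hr1⟩ := hr
    have hK0 : (0:ℝ) < K := by linarith
    have hr' : (1 - (1 - r) / K) ∈ Set.Ico (0:ℝ) 1 := by
      constructor
      · have h1 : (1 - r) / K ≤ 1 - r := div_le_self (by linarith) hK.le
        linarith
      · have h2 : 0 < (1 - r) / K := div_pos (by linarith) hK0
        linarith
    have hih := ih _ hr'
    have heq : 1 - (1 - (1 - (1 - r) / K)) / K ^ n = 1 - (1 - r) / K ^ (n + 1) := by
      have hKn : (K:ℝ) ^ n ≠ 0 := by positivity
      field_simp
      ring
    rw [heq] at hih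
    calc C ^ (n + 1) * omHat ω (1 - (1 - r) / K ^ (n + 1))
        = C * (C ^ n * omHat ω (1 - (1 - r) / K ^ (n + 1))) := by ring
      _ ≤ C * omHat ω (1 - (1 - r) / K) :=
          mul_le_mul_of_nonneg_left hih (by linarith)
      _ ≤ omHat ω r := h r ⟨hr0, hr1⟩

theorem stmt11 (ω : ℝ → ℝ) (hnn : ∀ r ∈ Set.Ico (0:ℝ) 1, 0 ≤ ω r)
    (hint : IntervalIntegrable ω volume 0 1) :
    Dcheck ω ↔ ∃ C > (0:ℝ), ∃ β > (0:ℝ), ∀ r t : ℝ, 0 ≤ r → r ≤ t → t < 1 →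
      omHat ω t ≤ C * ((1 - t) / (1 - r)) ^ β * omHat ω r := by
  unfold Dcheck
  constructor
  · rintro ⟨K, hK, C, hC, h⟩
    have hK0 : (0:ℝ) < K := by linarith
    have hC0 : (0:ℝ) < C := by linarith
    have hlogK : 0 < Real.log K := Real.log_pos hK
    have hlogC : 0 < Real.log C := Real.log_pos hC
    refine ⟨C, hC0, Real.log C / Real.log K, div_pos hlogC hlogK, ?_⟩
    intro r t hr hrt ht
    set β := Real.log C / Real.log K with hβ
    have hr1 : r < 1 := lt_of_le_of_lt hrt ht
    have h1t : (0:ℝ) < 1 - t := by linarith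
    have h1r : (0:ℝ) < 1 - r := by linarith
    set Q : ℝ := (1 - r) / (1 - t) with hQ
    have hQ1 : 1 ≤ Q := (le_div_iff₀ h1t).2 (by linarith)
    have hQ0 : 0 < Q := by linarith
    set x := Real.logb K Q with hx
    have hx0 : 0 ≤ x := Real.logb_nonneg hK hQ1
    set n := ⌊x⌋₊ with hn
    have hn1 : (n:ℝ) ≤ x := Nat.floor_le hx0
    have hn2 : x < n + 1 := Nat.lt_floor_add_one x
    have hKx : K ^ x = Q := Real.rpow_logb hK0 (ne_of_gt hK) hQ0
    have hKn0 : (0:ℝ) < K ^ n := by positivity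
    have hKn : (K:ℝ) ^ n ≤ Q := by
      have : (K:ℝ) ^ (n:ℝ) ≤ K ^ x := (Real.rpow_le_rpow_left_iff hK).2 hn1
      rwa [Real.rpow_natCast, hKx] at this
    -- p ≤ t
    set p := 1 - (1 - r) / K ^ n with hp
    have hKnQ : (K:ℝ) ^ n * (1 - t) ≤ 1 - r := (le_div_iff₀ h1t).1 hKn
    have hpt : p ≤ t := by
      have : 1 - t ≤ (1 - r) / K ^ n := (le_div_iff₀ hKn0).2 (by nlinarith)
      simp only [hp]; linarith
    have hp0 : 0 ≤ p := by
      have : (1 - r) / K ^ n ≤ 1 - r := div_le_self h1r.le (one_le_pow₀ hK.le)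
      simp only [hp]; linarith
    have hmono : omHat ω t ≤ omHat ω p := omHat_anti ω hnn hint hp0 hpt ht
    have hiter : C ^ n * omHat ω p ≤ omHat ω r :=
      omHat_iter ω hK hC h n r ⟨hr, hr1⟩
    have hCn0 : (0:ℝ) < C ^ n := by positivity
    have hQβ0 : (0:ℝ) < Q ^ β := Real.rpow_pos_of_pos hQ0 β
    -- key numeric inequality : Q ^ β ≤ C ^ (n+1)
    have hkey : Q ^ β ≤ C ^ (n + 1) := by
      have e1 : Q ^ β = Real.exp (Real.log Q * β) := Real.rpow_def_of_pos hQ0 β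
      have e2 : (C:ℝ) ^ (n + 1) = Real.exp (Real.log C * ((n:ℝ) + 1)) := by
        rw [← Real.rpow_natCast C (n+1), Real.rpow_def_of_pos hC0]
        push_cast; ring_nf
      rw [e1, e2]
      apply Real.exp_le_exp.2
      have hxeq : Real.log Q * β = Real.log C * x := by
        rw [hβ, hx, Real.logb]; field_simp
      rw [hxeq]
      exact mul_le_mul_of_nonneg_left hn2.le hlogC.le
    have hsβ : ((1 - t) / (1 - r)) ^ β = (Q ^ β)⁻¹ := by
      rw [hQ, ← Real.inv_rpow (by positivity), inv_div]
    have hines : (1:ℝ) / C ^ n ≤ C * ((1 - t) / (1 - r)) ^ β := by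
      rw [hsβ]
      rw [div_le_iff₀ hCn0]
      rw [mul_comm C _, mul_assoc]
      have : (Q ^ β)⁻¹ * (C * C ^ n) = (C ^ (n+1)) / (Q ^ β) := by
        rw [div_eq_mul_inv]; ring
      rw [this, le_div_iff₀ hQβ0, one_mul]
      exact hkey
    have hωr0 : 0 ≤ omHat ω r := omHat_nonneg ω hnn hr hr1.le
    have hmid : omHat ω p ≤ (1 / C ^ n) * omHat ω r := by
      rw [one_div, inv_mul_eq_div, le_div_iff₀ hCn0, mul_comm]
      exact hiter
    calc omHat ω t ≤ omHat ω p := hmono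
      _ ≤ (1 / C ^ n) * omHat ω r := hmid
      _ ≤ C * ((1 - t) / (1 - r)) ^ β * omHat ω r :=
          mul_le_mul_of_nonneg_right hines hωr0
  · rintro ⟨C, hC0, β, hβ0, h⟩
    set K : ℝ := max 2 ((2 * C) ^ β⁻¹) with hKdef
    have hK2 : (2:ℝ) ≤ K := le_max_left _ _
    have hK : (1:ℝ) < K := by linarith
    have hK0 : (0:ℝ) < K := by linarith
    refine ⟨K, hK, 2, one_lt_two, ?_⟩
    intro r hr
    obtain ⟨hr0, hr1⟩ := hr
    have h1r : (0:ℝ) < 1 - r := by linarith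
    set t := 1 - (1 - r) / K with ht
    have hdiv : 0 < (1 - r) / K := div_pos h1r hK0
    have hrt : r ≤ t := by
      have : (1 - r) / K ≤ 1 - r := div_le_self h1r.le hK.le
      simp only [ht]; linarith
    have ht1 : t < 1 := by simp only [ht]; linarith
    have hmain := h r t hr0 hrt ht1
    have hfrac : (1 - t) / (1 - r) = K⁻¹ := by
      simp only [ht]
      field_simp
      ring
    rw [hfrac] at hmain
    have hKβ : 2 * C ≤ K ^ β := by
      have h2C : (0:ℝ) ≤ (2 * C) ^ β⁻¹ := Real.rpow_nonneg (by positivity) _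
      have hle : (2 * C) ^ β⁻¹ ≤ K := le_max_right _ _
      calc 2 * C = ((2 * C) ^ β⁻¹) ^ β :=
            (Real.rpow_inv_rpow (by positivity) hβ0.ne').symm
          _ ≤ K ^ β := Real.rpow_le_rpow h2C hle hβ0.le
    have hhalf : C * K⁻¹ ^ β ≤ 1 / 2 := by
      rw [Real.inv_rpow hK0.le]
      rw [mul_inv_le_iff₀ (Real.rpow_pos_of_pos hK0 β)]
      linarith
    have hωr0 : 0 ≤ omHat ω r := omHat_nonneg ω hnn hr0 hr1.le
    have : omHat ω t ≤ (1 / 2) * omHat ω r := by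
      calc omHat ω t ≤ C * K⁻¹ ^ β * omHat ω r := hmain
        _ ≤ (1 / 2) * omHat ω r := mul_le_mul_of_nonneg_right hhalf hωr0
    simp only [ht] at this ⊢
    linarith
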